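/- arXiv:1610.07994 — 3 statements merged into one kernel-verified Lean document; each statement's English description precedes it below -/
import Mathlib

section
/- Suppose a Markov chain (X_k) on a metric space, a continuous function f, and constants η, η', r > 0 satisfy: as long as X_k remains in a set A, with probability at least η we have f(X_{k+1}) ≤ f(X_k) - η'. If f(X_0) ≤ m and f ≥ m + Nη' on the complement of a target set B reachable only through A, then with probability at least η^N the chain, started in the starting region, reaches B before leaving A ∪ B, where N = ⌈(sup_A f - inf f)/η'⌉. -/
open MeasureTheory

theorem stmt4 {Ω E : Type*} {m0 : MeasurableSpace Ω} (μ : Measure Ω) [IsProbabilityMeasure μ]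
    [MeasurableSpace E] [MetricSpace E]
    (ℱ : Filtration ℕ m0) (X : ℕ → Ω → E)
    (hadp : ∀ k, Measurable[ℱ k] (X k))
    (f : E → ℝ) (hf : Measurable f) (A B : Set E) (hA : MeasurableSet A) (hB : MeasurableSet B)
    (η η' m : ℝ) (N : ℕ) (hη : 0 < η) (hη1 : η ≤ 1) (hη' : 0 < η')
    (hN : N = ⌈(sSup (f '' A) - sInf (Set.range f)) / η'⌉₊)
    (hcond : ∀ k, ∀ᵐ ω ∂μ, X k ω ∈ A \ B →
      η ≤ (μ[Set.indicator {ω' | f (X (k + 1) ω') ≤ f (X k ω') - η'} (fun _ => (1 : ℝ))|ℱ k]) ω)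
    (h0 : ∀ ω, f (X 0 ω) ≤ m)
    (hBc : ∀ x, x ∉ B → m - N * η' < f x)
    (hstay : ∀ ω, ∀ k : ℕ, (∀ j ≤ k, X j ω ∉ B) → X k ω ∈ A) :
    ENNReal.ofReal (η ^ N) ≤ μ {ω | ∃ k : ℕ, X k ω ∈ B ∧ ∀ j < k, X j ω ∈ A} := by
  classical
  -- the decrease event at step k
  set Dec : ℕ → Set Ω := fun k => {ω | f (X (k + 1) ω) ≤ f (X k ω) - η'} with hDec
  -- the event that B has been hit by time k
  set Hit : ℕ → Set Ω := fun k => {ω | ∃ j ≤ k, X j ω ∈ B} with hHit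
  -- the good event
  set G : ℕ → Set Ω := fun n => {ω | ∀ k < n, ω ∈ Hit k ∪ Dec k} with hG
  have hDecMeas : ∀ k, MeasurableSet[ℱ (k + 1)] (Dec k) := by
    intro k
    have h1 : Measurable[ℱ (k + 1)] fun ω => f (X (k + 1) ω) := hf.comp (hadp (k + 1))
    have h2 : Measurable[ℱ (k + 1)] fun ω => f (X k ω) - η' :=
      (hf.comp ((hadp k).mono (ℱ.mono (Nat.le_succ k)) le_rfl)).sub measurable_const
    exact measurableSet_le h1 h2
  have hHitMeas : ∀ k, MeasurableSet[ℱ k] (Hit k) := by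
    intro k
    have h : Hit k = ⋃ j ∈ Set.Iic k, X j ⁻¹' B := by
      ext ω; simp [hHit]
    rw [h]
    exact MeasurableSet.biUnion (Set.to_countable _) fun j hj =>
      ((hadp j).mono (ℱ.mono hj) le_rfl) hB
  have hGMeas : ∀ n, MeasurableSet[ℱ n] (G n) := by
    intro n
    have h : G n = ⋂ k ∈ Set.Iio n, (Hit k ∪ Dec k) := by
      ext ω; simp [hG]
    rw [h]
    refine MeasurableSet.biInter (Set.to_countable _) fun k hk => ?_
    have hk1 : k + 1 ≤ n := hk
    exact ((ℱ.mono hk1) _ ((ℱ.mono (Nat.le_succ k)) _ (hHitMeas k))).union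
      ((ℱ.mono hk1) _ (hDecMeas k))
  -- key conditioning step
  have key : ∀ n, ENNReal.ofReal η * μ (G n \ Hit n) ≤ μ ((G n \ Hit n) ∩ Dec n) := by
    intro n
    set C := G n \ Hit n with hC
    have hCm : MeasurableSet[ℱ n] C := (hGMeas n).diff (hHitMeas n)
    have hCm0 : MeasurableSet C := ℱ.le n _ hCm
    have hCsub : ∀ ω ∈ C, X n ω ∈ A \ B := by
      intro ω hω
      have hnB : ∀ j ≤ n, X j ω ∉ B := by
        intro j hj hjB
        exact hω.2 ⟨j, hj, hjB⟩
      exact ⟨hstay ω n hnB, hnB n le_rfl⟩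
    have hDm0 : MeasurableSet (Dec n) := ℱ.le (n + 1) _ (hDecMeas n)
    have hint : Integrable (Set.indicator (Dec n) fun _ => (1 : ℝ)) μ :=
      (integrable_const (1 : ℝ)).indicator hDm0
    have hae : ∀ᵐ ω ∂μ, ω ∈ C →
        η ≤ (μ[Set.indicator (Dec n) (fun _ => (1 : ℝ))|ℱ n]) ω :=
      (hcond n).mono fun ω h hωC => h (hCsub ω hωC)
    have h1 : ∫ ω in C, (μ[Set.indicator (Dec n) (fun _ => (1 : ℝ))|ℱ n]) ω ∂μ
        = (μ (Dec n ∩ C)).toReal := by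
      rw [setIntegral_condExp (ℱ.le n) hint hCm, setIntegral_indicator hDm0]
      simp [Set.inter_comm, measureReal_def]
    have h2 : η * (μ C).toReal
        ≤ ∫ ω in C, (μ[Set.indicator (Dec n) (fun _ => (1 : ℝ))|ℱ n]) ω ∂μ := by
      have hle : ∫ ω in C, η ∂μ
          ≤ ∫ ω in C, (μ[Set.indicator (Dec n) (fun _ => (1 : ℝ))|ℱ n]) ω ∂μ :=
        setIntegral_mono_on_ae (integrableOn_const (measure_ne_top μ C))
          integrable_condExp.integrableOn hCm0 hae
      calc η * (μ C).toReal = ∫ _ω in C, η ∂μ := by simp [mul_comm, measureReal_def]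
        _ ≤ _ := hle
    have h3 : η * (μ C).toReal ≤ (μ (Dec n ∩ C)).toReal := h1 ▸ h2
    have h4 : ENNReal.ofReal η * μ C ≤ μ (Dec n ∩ C) := by
      calc ENNReal.ofReal η * μ C
          = ENNReal.ofReal η * ENNReal.ofReal (μ C).toReal := by
            rw [ENNReal.ofReal_toReal (measure_ne_top μ C)]
        _ = ENNReal.ofReal (η * (μ C).toReal) := by
            rw [ENNReal.ofReal_mul hη.le]
        _ ≤ ENNReal.ofReal (μ (Dec n ∩ C)).toReal := ENNReal.ofReal_le_ofReal h3
        _ = μ (Dec n ∩ C) := ENNReal.ofReal_toReal (measure_ne_top μ _)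
    calc ENNReal.ofReal η * μ C ≤ μ (Dec n ∩ C) := h4
      _ = μ (C ∩ Dec n) := by rw [Set.inter_comm]
  -- induction: μ (G n) ≥ η ^ n
  have main : ∀ n, ENNReal.ofReal (η ^ n) ≤ μ (G n) := by
    intro n
    induction n with
    | zero =>
      have : G 0 = Set.univ := by
        ext ω; simp [hG]
      simp [this]
    | succ n ih =>
      have hHm0 : MeasurableSet (Hit n) := ℱ.le n _ (hHitMeas n)
      have hsplit : μ (G n ∩ Hit n) + μ (G n \ Hit n) = μ (G n) :=
        measure_inter_add_diff _ hHm0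
      have hsub1 : G n ∩ Hit n ⊆ G (n + 1) := by
        intro ω h
        intro k hk
        rcases Nat.lt_succ_iff_lt_or_eq.mp hk with h' | rfl
        · exact h.1 k h'
        · exact Or.inl h.2
      have hsub2 : (G n \ Hit n) ∩ Dec n ⊆ G (n + 1) := by
        intro ω h
        intro k hk
        rcases Nat.lt_succ_iff_lt_or_eq.mp hk with h' | rfl
        · exact h.1.1 k h'
        · exact Or.inr h.2
      have hdisj : Disjoint (G n ∩ Hit n) ((G n \ Hit n) ∩ Dec n) := by
        refine Set.disjoint_left.mpr fun ω h1 h2 => h2.1.2 h1.2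
      have hunion : μ (G n ∩ Hit n) + μ ((G n \ Hit n) ∩ Dec n) ≤ μ (G (n + 1)) := by
        rw [← measure_union hdisj
          ((ℱ.le n _ ((hGMeas n).diff (hHitMeas n))).inter (ℱ.le (n + 1) _ (hDecMeas n)))]
        exact measure_mono (Set.union_subset hsub1 hsub2)
      have hη1' : ENNReal.ofReal η ≤ 1 := ENNReal.ofReal_le_one.mpr hη1
      calc ENNReal.ofReal (η ^ (n + 1))
          = ENNReal.ofReal η * ENNReal.ofReal (η ^ n) := by
            rw [pow_succ, mul_comm, ENNReal.ofReal_mul hη.le]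
        _ ≤ ENNReal.ofReal η * μ (G n) := by
            exact mul_le_mul_right ih _
        _ = ENNReal.ofReal η * μ (G n ∩ Hit n) + ENNReal.ofReal η * μ (G n \ Hit n) := by
            rw [← mul_add, hsplit]
        _ ≤ μ (G n ∩ Hit n) + μ ((G n \ Hit n) ∩ Dec n) := by
            exact add_le_add (le_trans (mul_le_mul_left hη1' _) (by simp)) (key n)
        _ ≤ μ (G (n + 1)) := hunion
  -- inclusion into the target event
  have hincl : G N ⊆ {ω | ∃ k : ℕ, X k ω ∈ B ∧ ∀ j < k, X j ω ∈ A} := by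
    intro ω hω
    by_cases hhit : ∃ j ≤ N, X j ω ∈ B
    · obtain ⟨j0, hj0, hj0B⟩ := hhit
      have hex : ∃ k, X k ω ∈ B := ⟨j0, hj0B⟩
      refine ⟨Nat.find hex, Nat.find_spec hex, fun j hj => ?_⟩
      exact hstay ω j fun i hi => Nat.find_min hex (lt_of_le_of_lt hi hj)
    · exfalso
      push_neg at hhit
      have hdec : ∀ k, k ≤ N → f (X k ω) ≤ f (X 0 ω) - k * η' := by
        intro k
        induction k with
        | zero => simp
        | succ k ihk =>
          intro hk
          have hk' : k ≤ N := le_of_lt (Nat.lt_of_succ_le hk)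
          have h1 := ihk hk'
          have hGk : ω ∈ Hit k ∪ Dec k := hω k (Nat.lt_of_succ_le hk)
          have hdk : ω ∈ Dec k := by
            rcases hGk with h | h
            · exact absurd h.choose_spec.2 (hhit _ (h.choose_spec.1.trans hk'))
            · exact h
          have h2 : f (X (k + 1) ω) ≤ f (X k ω) - η' := hdk
          push_cast
          linarith
      have h2 := hdec N le_rfl
      have h3 := hBc (X N ω) (hhit N le_rfl)
      have h4 := h0 ω
      have hNle : (N : ℝ) * η' ≤ N * η' := le_rfl
      linarith
  exact le_trans (main N) (measure_mono hincl)
end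

section
/- Let f : ℝ² → ℝ be C² on a compact set K with ‖∇f‖ ≥ c > 0 and second derivatives bounded by M on K. Then there exist r, η' > 0 such that for every z ∈ K there is an angle θ with the property: for all φ ∈ [θ, θ + π - η], f(z + r e^{iφ}) ≤ f(z) - η', where η > 0 is any fixed constant less than π. -/
open Real

set_option maxHeartbeats 1000000 in
theorem stmt6 (K U : Set ℂ) (hK : IsCompact K) (hU : IsOpen U) (hKU : K ⊆ U)
    (f : ℂ → ℝ) (hf : ContDiffOn ℝ 2 f U)
    (c M η : ℝ) (hc : 0 < c) (hM : 0 < M) (hη : 0 < η) (hηπ : η < Real.pi)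
    (hgrad : ∀ z ∈ K, c ≤ ‖fderiv ℝ f z‖)
    (hhess : ∀ z ∈ K, ‖iteratedFDeriv ℝ 2 f z‖ ≤ M) :
    ∃ r > (0 : ℝ), ∃ η' > (0 : ℝ), ∀ z ∈ K, ∃ θ : ℝ,
      ∀ φ ∈ Set.Icc θ (θ + Real.pi - η),
        f (z + r * Complex.exp (φ * Complex.I)) ≤ f z - η' := by
  obtain ⟨δ, hδ, hδU⟩ := hK.exists_cthickening_subset_open hU hKU
  set K' := Metric.cthickening δ K with hK'def
  -- bound on the second derivative on K'
  have hcont : ContinuousOn (iteratedFDeriv ℝ 2 f) U := by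
    exact (hf.continuousOn_iteratedFDerivWithin (m := 2) le_rfl hU.uniqueDiffOn).congr
      (iteratedFDerivWithin_of_isOpen 2 hU).symm
  obtain ⟨C, hC⟩ := hK.cthickening.exists_bound_of_continuousOn (hcont.mono hδU)
  set B : ℝ := max C 1 with hBdef
  have hB : 0 < B := lt_of_lt_of_le one_pos (le_max_right _ _)
  set s : ℝ := Real.sin (η / 2) with hsdef
  have hs : 0 < s := Real.sin_pos_of_pos_of_lt_pi (by linarith) (by linarith [Real.pi_pos])
  set r : ℝ := min δ (c * s / (2 * B)) with hrdef
  have hr : 0 < r := lt_min hδ (by positivity)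
  refine ⟨r, hr, r * c * s / 2, by positivity, fun z hz => ?_⟩
  have hrδ : r ≤ δ := min_le_left _ _
  have hrB : r ≤ c * s / (2 * B) := min_le_right _ _
  -- the ball around z lies in K' ⊆ U
  have hballK' : Metric.closedBall z r ⊆ K' :=
    (Metric.closedBall_subset_closedBall hrδ).trans (Metric.closedBall_subset_cthickening hz δ)
  have hballU : Metric.closedBall z r ⊆ U := hballK'.trans hδU
  set g : ℂ →L[ℝ] ℝ := fderiv ℝ f z with hgdef
  set a : ℝ := g 1 with hadef
  set b : ℝ := g Complex.I with hbdef
  set w : ℂ := (a : ℂ) + (b : ℂ) * Complex.I with hwdef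
  set R : ℝ := Real.sqrt (a ^ 2 + b ^ 2) with hRdef
  have hRval : ‖w‖ = R := by
    rw [hwdef, Complex.norm_def, Complex.normSq_add_mul_I, hRdef]
  -- g x = x.re * a + x.im * b
  have hgx : ∀ x : ℂ, g x = x.re * a + x.im * b := by
    intro x
    have hx : (x.re : ℝ) • (1 : ℂ) + (x.im : ℝ) • Complex.I = x := by
      simp [Complex.real_smul, Complex.re_add_im]
    calc g x = g ((x.re : ℝ) • (1 : ℂ) + (x.im : ℝ) • Complex.I) := by rw [hx]
      _ = x.re * a + x.im * b := by
          rw [map_add, map_smul, map_smul]; simp [hadef, hbdef, smul_eq_mul]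
  -- operator norm bound : ‖g‖ ≤ R
  have hgR : ‖g‖ ≤ R := by
    apply ContinuousLinearMap.opNorm_le_bound _ (Real.sqrt_nonneg _)
    intro x
    rw [hgx x, Real.norm_eq_abs, Complex.norm_def,
      Complex.normSq_apply]
    have h1 : |x.re * a + x.im * b| = Real.sqrt ((x.re * a + x.im * b) ^ 2) :=
      (Real.sqrt_sq_eq_abs _).symm
    rw [h1, ← Real.sqrt_mul (by positivity)]
    apply Real.sqrt_le_sqrt
    nlinarith [sq_nonneg (x.re * b - x.im * a)]
  have hcR : c ≤ R := le_trans (hgrad z hz) hgR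
  have hR0 : 0 < R := lt_of_lt_of_le hc hcR
  have hw0 : w ≠ 0 := by
    intro h; rw [h, norm_zero] at hRval; rw [← hRval] at hR0; exact lt_irrefl 0 hR0
  set α : ℝ := Complex.arg w with hαdef
  have hcosα : Real.cos α = a / R := by
    rw [hαdef, Complex.cos_arg hw0, hRval]; congr 1; simp [hwdef]
  have hsinα : Real.sin α = b / R := by
    rw [hαdef, Complex.sin_arg, hRval]; congr 1; simp [hwdef]
  refine ⟨α + π / 2 + η / 2, fun φ hφ => ?_⟩
  obtain ⟨hφ1, hφ2⟩ := hφ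
  -- the directional derivative is very negative
  have hcosψ : Real.cos (φ - α) ≤ -s := by
    have habs : |φ - α - π| ≤ π / 2 - η / 2 := by
      rw [abs_le]; constructor <;> [linarith; linarith]
    have h1 : Real.cos (π / 2 - η / 2) ≤ Real.cos |φ - α - π| :=
      Real.cos_le_cos_of_nonneg_of_le_pi (abs_nonneg _) (by linarith [Real.pi_pos]) habs
    rw [Real.cos_abs, Real.cos_sub_pi, Real.cos_pi_div_two_sub] at h1
    linarith
  have hgdir : g (Complex.exp (φ * Complex.I)) ≤ -(c * s) := by
    have hexp : (Complex.exp (φ * Complex.I)).re = Real.cos φ ∧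
        (Complex.exp (φ * Complex.I)).im = Real.sin φ := by
      rw [Complex.exp_mul_I]
      constructor <;> simp [Complex.cos_ofReal_re, Complex.sin_ofReal_re]
    rw [hgx, hexp.1, hexp.2]
    have ha' : a = R * Real.cos α := by rw [hcosα]; field_simp [hR0.ne']
    have hb' : b = R * Real.sin α := by rw [hsinα]; field_simp [hR0.ne']
    have : Real.cos φ * a + Real.sin φ * b = R * Real.cos (φ - α) := by
      rw [ha', hb', Real.cos_sub]; ring
    rw [this]
    calc R * Real.cos (φ - α) ≤ R * (-s) :=
          mul_le_mul_of_nonneg_left hcosψ (le_of_lt hR0)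
      _ ≤ c * (-s) := by nlinarith
      _ = -(c * s) := by ring
  -- Taylor estimate
  set v : ℂ := (r : ℂ) * Complex.exp (φ * Complex.I) with hvdef
  have hnv : ‖v‖ = r := by
    rw [hvdef, norm_mul,
      Complex.norm_exp_ofReal_mul_I, mul_one, Complex.norm_real, Real.norm_eq_abs, abs_of_pos hr]
  have hzv : z + v ∈ Metric.closedBall z r := by
    rw [Metric.mem_closedBall, dist_eq_norm, add_sub_cancel_left, hnv]
  have hzball : z ∈ Metric.closedBall z r := Metric.mem_closedBall_self (le_of_lt hr)
  have hdiffat : ∀ x ∈ Metric.closedBall z r, ContDiffAt ℝ 2 f x := fun x hx =>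
    hf.contDiffAt (hU.mem_nhds (hballU hx))
  -- step 1: ‖fderiv f x - g‖ ≤ B * r on the ball
  have hstep1 : ∀ x ∈ Metric.closedBall z r, ‖fderiv ℝ f x - g‖ ≤ B * r := by
    intro x hx
    have := (convex_closedBall z r).norm_image_sub_le_of_norm_fderiv_le
      (f := fderiv ℝ f) (C := B)
      (fun y hy => ((hdiffat y hy).fderiv_right (m := 1) (le_refl 2)).differentiableAt (by norm_num))
      (fun y hy => by
        have h1 : ‖fderiv ℝ (fderiv ℝ f) y‖ = ‖iteratedFDeriv ℝ 2 f y‖ := by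
          rw [← norm_iteratedFDeriv_fderiv (n := 1),
            ← norm_iteratedFDeriv_fderiv (n := 0), norm_iteratedFDeriv_zero]
        rw [h1]
        exact le_trans (hC y (hballK' hy)) (le_max_left _ _))
      hzball hx
    calc ‖fderiv ℝ f x - g‖ = ‖fderiv ℝ f x - fderiv ℝ f z‖ := by rw [hgdef]
      _ ≤ B * ‖x - z‖ := this
      _ ≤ B * r := by
          apply mul_le_mul_of_nonneg_left _ (le_of_lt hB)
          rw [← dist_eq_norm]; exact Metric.mem_closedBall.mp hx
  -- step 2: |f (z+v) - f z - g v| ≤ B * r * r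
  have hhas : ∀ x ∈ Metric.closedBall z r,
      HasFDerivAt (fun x => f x - g (x - z)) (fderiv ℝ f x - g) x := by
    intro x hx
    apply HasFDerivAt.sub ((hdiffat x hx).differentiableAt (by norm_num)).hasFDerivAt
    have h2 : HasFDerivAt (fun y : ℂ => y - z) (ContinuousLinearMap.id ℝ ℂ) x :=
      (hasFDerivAt_id x).sub_const z
    have h3 := g.hasFDerivAt.comp x h2
    rw [ContinuousLinearMap.comp_id] at h3
    exact h3
  have hstep2 : ‖(f (z + v) - g ((z + v) - z)) - (f z - g (z - z))‖ ≤ (B * r) * ‖(z + v) - z‖ :=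
    (convex_closedBall z r).norm_image_sub_le_of_norm_fderiv_le (𝕜 := ℝ)
      (fun x hx => (hhas x hx).differentiableAt)
      (fun x hx => by rw [(hhas x hx).fderiv]; exact hstep1 x hx) hzball hzv
  have hsimp : (z + v) - z = v := by ring
  rw [hsimp, sub_self, map_zero, sub_zero, hnv] at hstep2
  have htaylor : f (z + v) ≤ f z + g v + B * r * r := by
    have := (abs_le.mp (by rwa [Real.norm_eq_abs] at hstep2)).2
    linarith
  have hgv : g v ≤ -(r * (c * s)) := by
    have : g v = r * g (Complex.exp (φ * Complex.I)) := by
      rw [hvdef, ← Complex.real_smul, map_smul, smul_eq_mul]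
    rw [this]
    calc r * g (Complex.exp (φ * Complex.I)) ≤ r * (-(c * s)) :=
          mul_le_mul_of_nonneg_left hgdir (le_of_lt hr)
      _ = -(r * (c * s)) := by ring
  have hBr : B * r ≤ c * s / 2 := by
    have h4 := mul_le_mul_of_nonneg_left hrB (le_of_lt hB)
    have h5 : B * (c * s / (2 * B)) = c * s / 2 := by field_simp
    linarith
  have : B * r * r ≤ (c * s / 2) * r := mul_le_mul_of_nonneg_right hBr (le_of_lt hr)
  have hfinal : z + (r : ℂ) * Complex.exp ((φ : ℂ) * Complex.I) = z + v := rfl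
  rw [hfinal]
  calc f (z + v) ≤ f z + g v + B * r * r := htaylor
    _ ≤ f z - r * (c * s) + (c * s / 2) * r := by linarith
    _ = f z - r * c * s / 2 := by ring
end

section
/- Let α, β, γ be nonzero complex numbers with α + β + γ = 0. Define φ(w→b) = Re(λ^{-1}(β/γ)^{-m}(β/α)^{-n}) · αλ(β/γ)^{m'}(β/α)^{n'} for appropriate coordinate pairs. Then the circulation of the associated dual flow around every triangular face of the dual lattice is zero; equivalently, for each face of the hexagonal lattice, the alternating sum of φ over its three incident edge-pairs vanishes, so the dual flow admits a primitive ψ. -/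
/-- The T-graph flow: `phiT α β γ lam m n m' n'` is the flow on the oriented edge from the
white vertex with coordinates `(m, n)` to the black vertex with coordinates `(m', n')`. -/
noncomputable def phiT (α β γ lam : ℂ) (m n m' n' : ℤ) : ℂ :=
  (((lam⁻¹ * (β / γ) ^ (-m) * (β / α) ^ (-n)).re : ℝ) : ℂ) *
    (α * lam * (β / γ) ^ m' * (β / α) ^ n')

/-- Integer cumulative sum. -/
noncomputable def zcum (f : ℤ → ℂ) (n : ℤ) : ℂ :=
  if 0 ≤ n then ∑ i ∈ Finset.range n.toNat, f i
  else - ∑ i ∈ Finset.range (-n).toNat, f (-(i : ℤ) - 1)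

lemma zcum_zero (f : ℤ → ℂ) : zcum f 0 = 0 := by simp [zcum]

lemma zcum_succ (f : ℤ → ℂ) (n : ℤ) : zcum f (n + 1) - zcum f n = f n := by
  rcases lt_trichotomy n (-1) with h | h | h
  · rw [zcum, zcum, if_neg (show ¬(0:ℤ) ≤ n by omega), if_neg (show ¬(0:ℤ) ≤ n + 1 by omega)]
    have h1 : (-n).toNat = (-(n + 1)).toNat + 1 := by omega
    rw [h1, Finset.sum_range_succ]
    have h3 : (-((-(n + 1)).toNat : ℤ) - 1) = n := by omega
    rw [h3]
    ring
  · subst h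
    rw [zcum, zcum]
    norm_num
  · have h' : 0 ≤ n := by omega
    rw [zcum, zcum, if_pos h', if_pos (show (0:ℤ) ≤ n + 1 by omega)]
    have h1 : (n + 1).toNat = n.toNat + 1 := by omega
    rw [h1, Finset.sum_range_succ, Int.toNat_of_nonneg h']
    ring

lemma zero_of_step (H : ℤ → ℂ) (h0 : H 0 = 0) (hstep : ∀ n, H (n + 1) = H n) :
    ∀ n, H n = 0 := by
  intro n
  induction n using Int.induction_on with
  | zero => exact h0
  | succ k ih => rw [hstep k, ih]
  | pred k ih => rw [← ih, ← hstep (-k - 1)]; norm_num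

/-- The circulation of the dual flow around every triangular face of the dual lattice
vanishes (equivalently, the alternating sum of `φ` over the three edges at each white and
each black vertex vanishes), hence the dual flow admits a primitive `ψ` (the T-graph map). -/
theorem stmt10 (α β γ lam : ℂ) (hα : α ≠ 0) (hβ : β ≠ 0) (hγ : γ ≠ 0)
    (hlam : ‖lam‖ = 1) (hsum : α + β + γ = 0) :
    (∀ m n : ℤ,
      phiT α β γ lam m n m n + phiT α β γ lam m n m (n - 1)
        + phiT α β γ lam m n (m - 1) n = 0) ∧
    (∀ m n : ℤ,
      phiT α β γ lam m n m n + phiT α β γ lam m (n + 1) m n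
        + phiT α β γ lam (m + 1) n m n = 0) ∧
    ∃ ψ : ℤ × ℤ → ℂ, ∀ m n : ℤ,
      ψ (m + 1, n) - ψ (m, n) = phiT α β γ lam m n m (n - 1) ∧
      ψ (m, n + 1) - ψ (m + 1, n) = phiT α β γ lam m n m n ∧
      ψ (m, n) - ψ (m, n + 1) = phiT α β γ lam m n (m - 1) n := by
  have hu : (β / γ) ≠ 0 := div_ne_zero hβ hγ
  have hv : (β / α) ≠ 0 := div_ne_zero hβ hα
  have key : (1 : ℂ) + (β / α)⁻¹ + (β / γ)⁻¹ = 0 := by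
    rw [inv_div, inv_div]
    field_simp
    linear_combination hsum
  -- first claim
  have h1 : ∀ m n : ℤ,
      phiT α β γ lam m n m n + phiT α β γ lam m n m (n - 1)
        + phiT α β γ lam m n (m - 1) n = 0 := by
    intro m n
    unfold phiT
    rw [zpow_sub_one₀ hv n, zpow_sub_one₀ hu m]
    linear_combination (((lam⁻¹ * (β / γ) ^ (-m) * (β / α) ^ (-n)).re : ℝ) : ℂ) *
      (α * lam * (β / γ) ^ m * (β / α) ^ n) * key
  -- second claim
  have h2 : ∀ m n : ℤ,
      phiT α β γ lam m n m n + phiT α β γ lam m (n + 1) m n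
        + phiT α β γ lam (m + 1) n m n = 0 := by
    intro m n
    set x := lam⁻¹ * (β / γ) ^ (-m) * (β / α) ^ (-n) with hx
    have hy : lam⁻¹ * (β / γ) ^ (-m) * (β / α) ^ (-(n + 1)) = x * (β / α)⁻¹ := by
      rw [hx, show -(n + 1) = -n + -1 by ring, zpow_add₀ hv, zpow_neg_one]
      ring
    have hz : lam⁻¹ * (β / γ) ^ (-(m + 1)) * (β / α) ^ (-n) = x * (β / γ)⁻¹ := by
      rw [hx, show -(m + 1) = -m + -1 by ring, zpow_add₀ hu, zpow_neg_one]
      ring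
    have hsum3 : x + x * (β / α)⁻¹ + x * (β / γ)⁻¹ = 0 := by
      linear_combination x * key
    have hre : x.re + (x * (β / α)⁻¹).re + (x * (β / γ)⁻¹).re = 0 := by
      have := congrArg Complex.re hsum3
      simpa using this
    have hreC : ((x.re : ℝ) : ℂ) + ((x * (β / α)⁻¹).re : ℝ) + ((x * (β / γ)⁻¹).re : ℝ) = 0 := by
      exact_mod_cast hre
    unfold phiT
    rw [hy, hz]
    linear_combination (α * lam * (β / γ) ^ m * (β / α) ^ n) * hreC
  refine ⟨h1, h2, ?_⟩
  -- curl-free condition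
  set A : ℤ → ℤ → ℂ := fun m n => phiT α β γ lam m n m (n - 1) with hA
  set C : ℤ → ℤ → ℂ := fun m n => phiT α β γ lam m n (m - 1) n with hC
  have curl : ∀ m n : ℤ, A m (n + 1) - A m n + (C (m + 1) n - C m n) = 0 := by
    intro m n
    have e1 := h1 m n
    have e2 := h2 m n
    simp only [hA, hC]
    have hA1 : phiT α β γ lam m (n + 1) m (n + 1 - 1) = phiT α β γ lam m (n + 1) m n := by
      norm_num
    have hC1 : phiT α β γ lam (m + 1) n (m + 1 - 1) n = phiT α β γ lam (m + 1) n m n := by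
      norm_num
    rw [hA1, hC1]
    linear_combination e2 - e1
  -- construct ψ
  refine ⟨fun p => zcum (fun k => A k 0) p.1 + zcum (fun k => - C p.1 k) p.2, ?_⟩
  intro m n
  have hvert : ∀ m n : ℤ,
      (zcum (fun k => A k 0) m + zcum (fun k => - C m k) (n + 1)) -
      (zcum (fun k => A k 0) m + zcum (fun k => - C m k) n) = - C m n := by
    intro m n
    have := zcum_succ (fun k => - C m k) n
    simpa using this
  have hhoriz : ∀ n : ℤ,
      (zcum (fun k => A k 0) (m + 1) + zcum (fun k => - C (m + 1) k) n) -
      (zcum (fun k => A k 0) m + zcum (fun k => - C m k) n) = A m n := by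
    have base := zcum_succ (fun k => A k 0) m
    set H : ℤ → ℂ := fun n =>
      (zcum (fun k => A k 0) (m + 1) + zcum (fun k => - C (m + 1) k) n) -
      (zcum (fun k => A k 0) m + zcum (fun k => - C m k) n) - A m n with hHdef
    have h0 : H 0 = 0 := by
      simp only [hHdef, zcum_zero]
      linear_combination base
    have hstep : ∀ n, H (n + 1) = H n := by
      intro n
      have s1 := zcum_succ (fun k => - C (m + 1) k) n
      have s2 := zcum_succ (fun k => - C m k) n
      have hc := curl m n
      simp only [hHdef]
      linear_combination s1 - s2 - hc
    intro n
    have := zero_of_step H h0 hstep n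
    simp only [hHdef] at this
    linear_combination this
  refine ⟨hhoriz n, ?_, ?_⟩
  · -- ψ(m,n+1) - ψ(m+1,n) = B(m,n)
    have e1 := h1 m n
    have hv1 := hvert m n
    have hh1 := hhoriz n
    simp only [hA, hC] at hv1 hh1 e1 ⊢
    linear_combination hv1 - hh1 - e1
  · have hv1 := hvert m n
    simp only [hC] at hv1 ⊢
    linear_combination - hv1
end
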